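/- If Γ is a move semigroup, then the joined ensemble join(Γ) is again a move semigroup (it is closed under composition and inverse). In particular, for any move ensemble Ω, join(⟨Ω⟩) = ⟨join(⟨Ω⟩)⟩. -/

import Mathlib

open Filter Set

noncomputable section

/-- The unrestricted translation (`b = false`) or reflection (`b = true`)
with parameter `p`: `x ↦ x + p`, resp. `x ↦ p - x`. -/
def uEval (b : Bool) (p : ℝ) (x : ℝ) : ℝ := if b then p - x else x + p

/-- A restricted move `γ|_D`: a translation (`isRefl = false`) or a
reflection (`isRefl = true`) together with a domain. -/
structure Move where
  isRefl : Bool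
  param : ℝ
  dom : Set ℝ

namespace Move

def eval (m : Move) : ℝ → ℝ := uEval m.isRefl m.param

/-- The character: `+1` for translations, `-1` for reflections. -/
def chi (m : Move) : ℝ := if m.isRefl then -1 else 1

def image (m : Move) : Set ℝ := m.eval '' m.dom

def graph (m : Move) : Set (ℝ × ℝ) := (fun x => (x, m.eval x)) '' m.dom

/-- Domains of moves must be open intervals or empty. -/
def ValidDom (D : Set ℝ) : Prop := IsOpen D ∧ D.OrdConnected

/-- A valid move: open-interval-or-empty domain; moves with empty domain are
normalized (`param = 0`), so that there are exactly two empty moves, one of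
each character. -/
def Valid (m : Move) : Prop := ValidDom m.dom ∧ (m.dom = ∅ → m.param = 0)

/-- The move `γ|_D` (normalized representative). -/
def mk' (b : Bool) (p : ℝ) (D : Set ℝ) : Move :=
  letI : Decidable (D = ∅) := Classical.dec _
  ⟨b, if D = ∅ then 0 else p, D⟩

/-- Composition of moves: `γ₂|_{D₂} ∘ γ₁|_{D₁} = (γ₂ ∘ γ₁)|_{D₁ ∩ γ₁⁻¹ D₂}`. -/
def comp (m2 m1 : Move) : Move :=
  mk' (m2.isRefl != m1.isRefl)
    (if m2.isRefl then m2.param - m1.param else m1.param + m2.param)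
    (m1.dom ∩ m1.eval ⁻¹' m2.dom)

/-- Inverse of a move: `(γ|_D)⁻¹ = γ⁻¹|_{γ(D)}`. -/
def inv (m : Move) : Move :=
  mk' m.isRefl (if m.isRefl then m.param else -m.param) (m.eval '' m.dom)

/-- The restriction partial order: `m1` is a restriction of `m2`. -/
def le (m1 m2 : Move) : Prop :=
  m1.isRefl = m2.isRefl ∧ m1.dom ⊆ m2.dom ∧ ∀ x ∈ m1.dom, m1.eval x = m2.eval x

end Move

/-- A move ensemble: a set of (valid) moves. -/
def IsMoveEnsemble (Ω : Set Move) : Prop := ∀ m ∈ Ω, m.Valid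

/-- A move semigroup: a move ensemble closed under composition and inverse. -/
def IsMoveSemigroup (Γ : Set Move) : Prop :=
  IsMoveEnsemble Γ ∧ (∀ m1 ∈ Γ, ∀ m2 ∈ Γ, Move.comp m2 m1 ∈ Γ) ∧
    (∀ m ∈ Γ, Move.inv m ∈ Γ)

/-- `⟨Ω⟩`: the smallest move semigroup containing `Ω`. -/
def semi (Ω : Set Move) : Set Move := ⋂₀ {Γ | IsMoveSemigroup Γ ∧ Ω ⊆ Γ}

/-- Axiom (restrict). -/
def RestrictClosed (Ω : Set Move) : Prop :=
  ∀ m ∈ Ω, ∀ D' : Set ℝ, D' ⊆ m.dom → Move.ValidDom D' →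
    Move.mk' m.isRefl m.param D' ∈ Ω

/-- The restriction closure of an ensemble. -/
def restrictCl (Ω : Set Move) : Set Move := ⋂₀ {Γ | RestrictClosed Γ ∧ Ω ⊆ Γ}

/-- Join-closed: restriction-closed and closed under continuation (joins). -/
def JoinClosed (Ω : Set Move) : Prop :=
  RestrictClosed Ω ∧
    ∀ (b : Bool) (p : ℝ) (J : Set (Set ℝ)), J.Nonempty →
      (∀ I ∈ J, Move.mk' b p I ∈ Ω) → (⋃₀ J).OrdConnected →
      Move.mk' b p (⋃₀ J) ∈ Ω

/-- `join(Ω)`: the smallest join-closed ensemble containing `Ω`. -/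
def joinCl (Ω : Set Move) : Set Move := ⋂₀ {Γ | JoinClosed Γ ∧ Ω ⊆ Γ}

/-- `joinsemi(Ω) = join(⟨Ω⟩)`: the joined move semigroup generated by `Ω`. -/
def joinsemi (Ω : Set Move) : Set Move := joinCl (semi Ω)

/-- `θ` respects the move `γ|_D`: `θ(γ(x)) = χ(γ)·θ(x) + c` on `D`. -/
def Respects (θ : ℝ → ℝ) (m : Move) : Prop :=
  ∃ c : ℝ, ∀ x ∈ m.dom, θ (m.eval x) = m.chi * θ x + c

/-- `θ` respects each move of the ensemble `Ω`. -/
def RespectsAll (θ : ℝ → ℝ) (Ω : Set Move) : Prop := ∀ m ∈ Ω, Respects θ m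

/-- All translation moves with graph contained in `O`. -/
def tMoves (O : Set (ℝ × ℝ)) : Set Move :=
  {m | m.isRefl = false ∧ m.Valid ∧ m.graph ⊆ O}

/-- All reflection moves with graph contained in `O`. -/
def rMoves (O : Set (ℝ × ℝ)) : Set Move :=
  {m | m.isRefl = true ∧ m.Valid ∧ m.graph ⊆ O}

/-- All moves with graph contained in `O`. -/
def movesIn (O : Set (ℝ × ℝ)) : Set Move := {m | m.Valid ∧ m.graph ⊆ O}

/-- Translation moves graph of an ensemble. -/
def grPlus (Ω : Set Move) : Set (ℝ × ℝ) :=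
  {q | ∃ m ∈ Ω, m.isRefl = false ∧ q ∈ m.graph}

/-- Reflection moves graph of an ensemble. -/
def grMinus (Ω : Set Move) : Set (ℝ × ℝ) :=
  {q | ∃ m ∈ Ω, m.isRefl = true ∧ q ∈ m.graph}

/-- `dom(O)`: union of the domains of the moves in `movesIn O`. -/
def domOf (O : Set (ℝ × ℝ)) : Set ℝ := {x | ∃ m ∈ movesIn O, x ∈ m.dom}

/-- `im(O)`: union of the images of the moves in `movesIn O`. -/
def imOf (O : Set (ℝ × ℝ)) : Set ℝ := {x | ∃ m ∈ movesIn O, x ∈ m.image}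

/-- domain of a move ensemble. -/
def domEns (Ω : Set Move) : Set ℝ := {x | ∃ m ∈ Ω, x ∈ m.dom}

/-- image of a move ensemble. -/
def imEns (Ω : Set Move) : Set ℝ := {x | ∃ m ∈ Ω, x ∈ m.image}

/-- Convergence of a sequence of unrestricted moves (character, parameter):
all but finitely many have character `b`, and the parameters tend to `p`. -/
def ConvergesTo (γ : ℕ → Bool × ℝ) (b : Bool) (p : ℝ) : Prop :=
  (∀ᶠ i in atTop, (γ i).1 = b) ∧ Tendsto (fun i => (γ i).2) atTop (nhds p)

/-- Axiom (lim): fixed-domain limits of moves. -/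
def LimClosed (Ω : Set Move) : Prop :=
  ∀ D : Set ℝ, Move.ValidDom D →
    ∀ (γ : ℕ → Bool × ℝ) (b : Bool) (p : ℝ), ConvergesTo γ b p →
      (∀ i, Move.mk' (γ i).1 (γ i).2 D ∈ Ω) → Move.mk' b p D ∈ Ω

/-- `lim(Ω)`: the smallest superset of `Ω` satisfying (lim). -/
def limCl (Ω : Set Move) : Set Move := ⋂₀ {Γ | LimClosed Γ ∧ Ω ⊆ Γ}

/-- Axiom (arblim): limits of moves with converging domains. -/
def ArbLimClosed (Ω : Set Move) : Prop :=
  ∀ (γ : ℕ → Bool × ℝ) (b : Bool) (p : ℝ) (l u : ℕ → ℝ) (l₀ u₀ : ℝ),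
    ConvergesTo γ b p → Tendsto l atTop (nhds l₀) → Tendsto u atTop (nhds u₀) →
    (∀ i, Move.mk' (γ i).1 (γ i).2 (Set.Ioo (l i) (u i)) ∈ Ω) →
    Move.mk' b p (Set.Ioo l₀ u₀) ∈ Ω

/-- `arblim(Ω)`: the smallest superset of `Ω` satisfying (arblim). -/
def arblimCl (Ω : Set Move) : Set Move := ⋂₀ {Γ | ArbLimClosed Γ ∧ Ω ⊆ Γ}

/-- Axiom (kaleido). -/
def Kaleidoscopic (Ω : Set Move) : Prop :=
  ∀ D I : Set ℝ, Move.ValidDom D → Move.ValidDom I →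
    (tMoves (D ×ˢ I) ⊆ Ω ↔ rMoves (D ×ˢ I) ⊆ Ω)

/-- Axiom (extend_A): continuous domain extension relative to the open set `A`. -/
def ExtendClosed (A : Set ℝ) (Ω : Set Move) : Prop :=
  ∀ (b : Bool) (p : ℝ) (J : Set (Set ℝ)) (D : Set ℝ), J.Nonempty →
    (∀ I ∈ J, Move.mk' b p I ∈ Ω) → Move.ValidDom D →
    D ⊆ closure (⋃₀ J) ∩ A ∩ uEval b p ⁻¹' A →
    Move.mk' b p D ∈ Ω

/-- `joinextend_A(Ω)`: the smallest superset of `Ω` satisfying (extend_A). -/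
def joinExtendCl (A : Set ℝ) (Ω : Set Move) : Set Move :=
  ⋂₀ {Γ | ExtendClosed A Γ ∧ Ω ⊆ Γ}

/-- A closed move semigroup with respect to the open set `A`. -/
def ClosedMoveSemigroup (A : Set ℝ) (Γ : Set Move) : Prop :=
  IsMoveSemigroup Γ ∧ JoinClosed Γ ∧ Kaleidoscopic Γ ∧ LimClosed Γ ∧
    ExtendClosed A Γ

/-- The moves closure `ctscl(Ω)`: the smallest closed move semigroup
(with respect to `A`) containing `Ω`. -/
def ctscl (A : Set ℝ) (Ω : Set Move) : Set Move :=
  ⋂₀ {Γ | ClosedMoveSemigroup A Γ ∧ Ω ⊆ Γ}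

/-- The set of maximal elements of `Ω` in the restriction partial order. -/
def MaxOf (Ω : Set Move) : Set Move :=
  {m ∈ Ω | ∀ m' ∈ Ω, Move.le m m' → Move.le m' m}

section Aux

open Move

lemma mk'_isRefl' (b : Bool) (p : ℝ) (D : Set ℝ) : (mk' b p D).isRefl = b := rfl

lemma mk'_dom' (b : Bool) (p : ℝ) (D : Set ℝ) : (mk' b p D).dom = D := rfl

lemma mk'_congr' (b : Bool) {p q : ℝ} {D : Set ℝ} (h : D ≠ ∅ → p = q) :
    mk' b p D = mk' b q D := by
  unfold Move.mk'
  by_cases hD : D = ∅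
  · simp [hD]
  · simp [hD, h hD]

lemma mk'_param_of_ne (b : Bool) (p : ℝ) {D : Set ℝ} (h : D ≠ ∅) :
    (mk' b p D).param = p := by
  unfold Move.mk'; simp [h]

lemma mk'_of_valid {m : Move} (hm : m.Valid) : mk' m.isRefl m.param m.dom = m := by
  cases m with
  | mk b p D =>
    unfold Move.mk'
    by_cases hD : D = ∅
    · have hp : p = 0 := hm.2 hD
      subst hp; simp [hD]
    · simp [hD]

lemma uEval_false (p x : ℝ) : uEval false p x = x + p := rfl

lemma uEval_true (p x : ℝ) : uEval true p x = p - x := rfl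

lemma uEval_continuous (b : Bool) (p : ℝ) : Continuous (uEval b p) := by
  cases b
  · simpa [funext (uEval_false p)] using (continuous_add_right p)
  · simpa [funext (uEval_true p)] using (continuous_sub_left p)

lemma ordConnected_preimage_uEval (b : Bool) (p : ℝ) {X : Set ℝ}
    (hX : X.OrdConnected) : (uEval b p ⁻¹' X).OrdConnected := by
  cases b <;> refine ⟨fun x hx y hy z hz => ?_⟩ <;>
    simp only [Set.mem_preimage, uEval_false, uEval_true] at hx hy ⊢
  · exact hX.out hx hy ⟨by linarith [hz.1], by linarith [hz.2]⟩
  · exact hX.out hy hx ⟨by linarith [hz.2], by linarith [hz.1]⟩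

lemma validDom_preimage_uEval (b : Bool) (p : ℝ) {X : Set ℝ}
    (hX : ValidDom X) : ValidDom (uEval b p ⁻¹' X) :=
  ⟨hX.1.preimage (uEval_continuous b p), ordConnected_preimage_uEval b p hX.2⟩

lemma uEval_image_eq (b : Bool) (p : ℝ) (X : Set ℝ) :
    uEval b p '' X = uEval b (if b then p else -p) ⁻¹' X := by
  cases b
  · show uEval false p '' X = uEval false (-p) ⁻¹' X
    ext y
    simp only [Set.mem_image, Set.mem_preimage, uEval_false]
    constructor
    · rintro ⟨x, hx, rfl⟩; simpa using hx
    · intro h; exact ⟨y + -p, h, by ring⟩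
  · show uEval true p '' X = uEval true p ⁻¹' X
    ext y
    simp only [Set.mem_image, Set.mem_preimage, uEval_true]
    constructor
    · rintro ⟨x, hx, rfl⟩; simpa using hx
    · intro h; exact ⟨p - y, h, by ring⟩

lemma ordConnected_image_uEval (b : Bool) (p : ℝ) {X : Set ℝ}
    (hX : X.OrdConnected) : (uEval b p '' X).OrdConnected := by
  rw [uEval_image_eq]; exact ordConnected_preimage_uEval _ _ hX

lemma validDom_image_uEval (b : Bool) (p : ℝ) {X : Set ℝ}
    (hX : ValidDom X) : ValidDom (uEval b p '' X) := by
  rw [uEval_image_eq]; exact validDom_preimage_uEval _ _ hX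

lemma validDom_inter {D E : Set ℝ} (hD : ValidDom D) (hE : ValidDom E) :
    ValidDom (D ∩ E) := ⟨hD.1.inter hE.1, hD.2.inter hE.2⟩

lemma comp_eq (m2 m1 : Move) :
    Move.comp m2 m1 = mk' (m2.isRefl != m1.isRefl)
      (if m2.isRefl then m2.param - m1.param else m1.param + m2.param)
      (m1.dom ∩ uEval m1.isRefl m1.param ⁻¹' m2.dom) := rfl

lemma inv_eq (m : Move) :
    Move.inv m = mk' m.isRefl (if m.isRefl then m.param else -m.param)
      (uEval m.isRefl m.param '' m.dom) := rfl

lemma comp_mk'_left (b2 : Bool) (p2 : ℝ) (D2 : Set ℝ) (m1 : Move) :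
    Move.comp (mk' b2 p2 D2) m1 = mk' (b2 != m1.isRefl)
      (if b2 then p2 - m1.param else m1.param + p2)
      (m1.dom ∩ uEval m1.isRefl m1.param ⁻¹' D2) := by
  rw [comp_eq, mk'_isRefl', mk'_dom']
  by_cases hD2 : D2 = ∅
  · apply mk'_congr'
    intro h
    exact absurd (by simp [hD2]) h
  · rw [mk'_param_of_ne b2 p2 hD2]

lemma comp_mk'_right (m2 : Move) (b1 : Bool) (p1 : ℝ) (D1 : Set ℝ) :
    Move.comp m2 (mk' b1 p1 D1) = mk' (m2.isRefl != b1)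
      (if m2.isRefl then m2.param - p1 else p1 + m2.param)
      (D1 ∩ uEval b1 p1 ⁻¹' m2.dom) := by
  rw [comp_eq, mk'_isRefl', mk'_dom']
  by_cases hD1 : D1 = ∅
  · subst hD1
    have h0 : (mk' b1 p1 (∅ : Set ℝ)).param = 0 := by unfold Move.mk'; simp
    rw [h0]
    have : ∀ q : ℝ, (∅ : Set ℝ) ∩ uEval b1 q ⁻¹' m2.dom = ∅ := fun q => by simp
    rw [this, this]
    apply mk'_congr'; intro h; exact absurd rfl h
  · rw [mk'_param_of_ne b1 p1 hD1]

lemma inv_mk' (b : Bool) (p : ℝ) (D : Set ℝ) :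
    Move.inv (mk' b p D) = mk' b (if b then p else -p) (uEval b p '' D) := by
  rw [inv_eq, mk'_isRefl', mk'_dom']
  by_cases hD : D = ∅
  · subst hD
    simp only [Set.image_empty]
    apply mk'_congr'; intro h; exact absurd rfl h
  · rw [mk'_param_of_ne b p hD]

lemma valid_mk' (b : Bool) (p : ℝ) {D : Set ℝ} (hD : ValidDom D) :
    (mk' b p D).Valid := by
  refine ⟨hD, fun h => ?_⟩
  have hD0 : D = ∅ := h
  unfold Move.mk'
  simp [hD0]

lemma subset_joinCl (Ω : Set Move) : Ω ⊆ joinCl Ω :=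
  fun _ hm _ hΓ => hΓ.2 hm

lemma joinCl_subset {Ω S : Set Move} (hS : JoinClosed S) (hsub : Ω ⊆ S) :
    joinCl Ω ⊆ S := Set.sInter_subset_of_mem ⟨hS, hsub⟩

lemma joinClosed_joinCl (Ω : Set Move) : JoinClosed (joinCl Ω) := by
  constructor
  · intro m hm D' hsub hD' Γ hΓ
    exact hΓ.1.1 m (hm Γ hΓ) D' hsub hD'
  · intro b p J hne hJ hord Γ hΓ
    exact hΓ.1.2 b p J hne (fun I hI => hJ I hI Γ hΓ) hord

lemma joinCl_restrict {Γ : Set Move} {b : Bool} {p : ℝ} {D D' : Set ℝ}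
    (h : mk' b p D ∈ joinCl Γ) (hsub : D' ⊆ D) (hD' : ValidDom D') :
    mk' b p D' ∈ joinCl Γ := by
  have := (joinClosed_joinCl Γ).1 _ h D' hsub hD'
  rw [mk'_isRefl'] at this
  rwa [show mk' b p D' = mk' b (mk' b p D).param D' from
    mk'_congr' b fun hne => by
      have hDne : D ≠ ∅ := fun hD => hne (Set.eq_empty_of_subset_empty (hD ▸ hsub))
      rw [mk'_param_of_ne b p hDne]]

lemma joinCl_join {Γ : Set Move} {b : Bool} {p : ℝ} {J : Set (Set ℝ)}
    (hne : J.Nonempty) (h : ∀ I ∈ J, mk' b p I ∈ joinCl Γ)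
    (hord : (⋃₀ J).OrdConnected) : mk' b p (⋃₀ J) ∈ joinCl Γ :=
  (joinClosed_joinCl Γ).2 b p J hne h hord

lemma joinCl_ensemble {Γ : Set Move} (hΓ : IsMoveEnsemble Γ) :
    IsMoveEnsemble (joinCl Γ) := by
  have : joinCl Γ ⊆ {m | m.Valid} := by
    apply joinCl_subset _ hΓ
    constructor
    · intro m hm D' _ hD'
      exact valid_mk' _ _ hD'
    · intro b p J hne hJ hord
      refine valid_mk' _ _ ⟨isOpen_sUnion fun I hI => ?_, hord⟩
      exact ((hJ I hI).1).1
  exact fun m hm => this hm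

end Aux

/-- The joined ensemble of a move semigroup is again a move semigroup;
in particular `join(⟨Ω⟩) = ⟨join(⟨Ω⟩)⟩` for every move ensemble `Ω`. -/
theorem joinCl_isMoveSemigroup :
    (∀ Γ : Set Move, IsMoveSemigroup Γ → IsMoveSemigroup (joinCl Γ)) ∧
    (∀ Ω : Set Move, IsMoveEnsemble Ω →
      joinCl (semi Ω) = semi (joinCl (semi Ω))) := by
  have main : ∀ Γ : Set Move, IsMoveSemigroup Γ → IsMoveSemigroup (joinCl Γ) := by
    intro Γ hΓ
    obtain ⟨hens, hcomp, hinv⟩ := hΓ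
    -- closure under inverse
    have hinvCl : ∀ m ∈ joinCl Γ, Move.inv m ∈ joinCl Γ := by
      have key : joinCl Γ ⊆ {m | m ∈ joinCl Γ ∧ Move.inv m ∈ joinCl Γ} := by
        apply joinCl_subset
        · constructor
          · rintro m ⟨hm, hminv⟩ D' hsub hD'
            refine ⟨(joinClosed_joinCl Γ).1 m hm D' hsub hD', ?_⟩
            rw [inv_mk']
            rw [inv_eq] at hminv
            exact joinCl_restrict hminv (Set.image_mono hsub)
              (validDom_image_uEval _ _ hD')
          · rintro b p J hne hJ hord
            refine ⟨joinCl_join hne (fun I hI => (hJ I hI).1) hord, ?_⟩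
            have himg : uEval b p '' ⋃₀ J = ⋃₀ ((fun I => uEval b p '' I) '' J) := by
              rw [Set.image_sUnion]
            rw [inv_mk', himg]
            apply joinCl_join (hne.image _)
            · rintro I' ⟨I, hI, rfl⟩
              have h2 := (hJ I hI).2
              rwa [inv_mk'] at h2
            · rw [← himg]
              exact ordConnected_image_uEval b p hord
        · intro m hm
          exact ⟨subset_joinCl Γ hm, subset_joinCl Γ (hinv m hm)⟩
      exact fun m hm => (key hm).2
    -- closure under composition : step 1
    have step1 : ∀ m1 ∈ Γ, ∀ m2 ∈ joinCl Γ, Move.comp m2 m1 ∈ joinCl Γ := by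
      intro m1 hm1
      have hm1v := hens m1 hm1
      have key : joinCl Γ ⊆ {m2 | m2 ∈ joinCl Γ ∧ Move.comp m2 m1 ∈ joinCl Γ} := by
        apply joinCl_subset
        · constructor
          · rintro m2 ⟨hm2, hc⟩ D' hsub hD'
            refine ⟨(joinClosed_joinCl Γ).1 m2 hm2 D' hsub hD', ?_⟩
            rw [comp_mk'_left]
            rw [comp_eq] at hc
            exact joinCl_restrict hc
              (Set.inter_subset_inter_right _ (Set.preimage_mono hsub))
              (validDom_inter hm1v.1 (validDom_preimage_uEval _ _ hD'))
          · rintro b p J hne hJ hord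
            refine ⟨joinCl_join hne (fun I hI => (hJ I hI).1) hord, ?_⟩
            have hset : m1.dom ∩ uEval m1.isRefl m1.param ⁻¹' ⋃₀ J
                = ⋃₀ ((fun I => m1.dom ∩ uEval m1.isRefl m1.param ⁻¹' I) '' J) := by
              rw [Set.sUnion_image]
              ext x
              simp only [Set.mem_inter_iff, Set.mem_preimage, Set.mem_sUnion,
                Set.mem_iUnion, exists_prop]
              tauto
            rw [comp_mk'_left, hset]
            apply joinCl_join (hne.image _)
            · rintro I' ⟨I, hI, rfl⟩
              have h2 := (hJ I hI).2
              rwa [comp_mk'_left] at h2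
            · rw [← hset]
              exact hm1v.1.2.inter (ordConnected_preimage_uEval _ _ hord)
        · intro m2 hm2
          exact ⟨subset_joinCl Γ hm2, subset_joinCl Γ (hcomp m1 hm1 m2 hm2)⟩
      intro m2 hm2
      exact (key hm2).2
    -- closure under composition : step 2
    have step2 : ∀ m1 ∈ joinCl Γ, ∀ m2 ∈ joinCl Γ, Move.comp m2 m1 ∈ joinCl Γ := by
      intro m1 hm1 m2 hm2
      have hm2v : m2.Valid := joinCl_ensemble hens m2 hm2
      have key : joinCl Γ ⊆ {m | m ∈ joinCl Γ ∧ Move.comp m2 m ∈ joinCl Γ} := by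
        apply joinCl_subset
        · constructor
          · rintro m ⟨hm, hc⟩ D' hsub hD'
            refine ⟨(joinClosed_joinCl Γ).1 m hm D' hsub hD', ?_⟩
            rw [comp_mk'_right]
            rw [comp_eq] at hc
            exact joinCl_restrict hc
              (Set.inter_subset_inter_left _ hsub)
              (validDom_inter hD' (validDom_preimage_uEval _ _ hm2v.1))
          · rintro b p J hne hJ hord
            refine ⟨joinCl_join hne (fun I hI => (hJ I hI).1) hord, ?_⟩
            have hset : (⋃₀ J) ∩ uEval b p ⁻¹' m2.dom
                = ⋃₀ ((fun I => I ∩ uEval b p ⁻¹' m2.dom) '' J) := by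
              rw [Set.sUnion_image]
              ext x
              simp only [Set.mem_inter_iff, Set.mem_preimage, Set.mem_sUnion,
                Set.mem_iUnion, exists_prop]
              tauto
            rw [comp_mk'_right, hset]
            apply joinCl_join (hne.image _)
            · rintro I' ⟨I, hI, rfl⟩
              have h2 := (hJ I hI).2
              rwa [comp_mk'_right] at h2
            · rw [← hset]
              exact hord.inter (ordConnected_preimage_uEval _ _ hm2v.1.2)
        · intro m hm
          exact ⟨subset_joinCl Γ hm, step1 m hm m2 hm2⟩
      exact (key hm1).2
    exact ⟨joinCl_ensemble hens, step2, hinvCl⟩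
  refine ⟨main, fun Ω hΩ => ?_⟩
  have hvalidSG : IsMoveSemigroup {m : Move | m.Valid} := by
    refine ⟨fun m hm => hm, fun m1 h1 m2 h2 => ?_, fun m hm => ?_⟩
    · rw [comp_eq]
      exact valid_mk' _ _ (validDom_inter h1.1 (validDom_preimage_uEval _ _ h2.1))
    · rw [inv_eq]
      exact valid_mk' _ _ (validDom_image_uEval _ _ hm.1)
  have hsemiSG : IsMoveSemigroup (semi Ω) := by
    refine ⟨?_, ?_, ?_⟩
    · intro m hm
      exact hm {m | m.Valid} ⟨hvalidSG, fun m' hm' => hΩ m' hm'⟩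
    · intro m1 h1 m2 h2 Δ hΔ
      exact hΔ.1.2.1 m1 (h1 Δ hΔ) m2 (h2 Δ hΔ)
    · intro m hm Δ hΔ
      exact hΔ.1.2.2 m (hm Δ hΔ)
  have hSG := main _ hsemiSG
  apply Set.Subset.antisymm
  · intro m hm Δ hΔ
    exact hΔ.2 hm
  · exact Set.sInter_subset_of_mem ⟨hSG, subset_rfl⟩
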